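/- Let c ∈ (0, 1/2]. Define f : Ω_c → ℝ by f(x,y,z) = z·log₂(z/(xy)) + (x−z)·log₂((x−z)/(x(1−y))) + (y−z)·log₂((y−z)/((1−x)y)) + (1−x−y+z)·log₂((1−x−y+z)/((1−x)(1−y))), where Ω_c ⊆ ℝ³ is the set of triples (x,y,z) satisfying c ≤ x ≤ 1−c, c ≤ y ≤ 1−c, c²·x ≤ z ≤ (1−c²)·x, c²·y ≤ z ≤ (1−c²)·y, c²·(1−x) ≤ 1+z−x−y ≤ (1−c²)·(1−x), and c²·(1−y) ≤ 1+z−x−y ≤ (1−c²)·(1−y). Then: (i) for any pair (X,Y) of {0,1}-valued random variables with (E[X], E[Y], E[XY]) ∈ Ω_c, one has I(X;Y) = f(E[X], E[Y], E[XY]); and (ii) f is 16·log₂(1/c)-Lipschitz with respect to the sup norm on Ω_c, i.e., |f(u) − f(v)| ≤ 16·log₂(1/c)·max(|u₁−v₁|, |u₂−v₂|, |u₃−v₃|) for all u, v ∈ Ω_c. -/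

import Mathlib

/-- The function `f` expressing mutual information (in bits) of a pair of binary random
variables in terms of `(E[X], E[Y], E[XY])`. -/
noncomputable def fMI (x y z : ℝ) : ℝ :=
  z * Real.logb 2 (z / (x * y))
    + (x - z) * Real.logb 2 ((x - z) / (x * (1 - y)))
    + (y - z) * Real.logb 2 ((y - z) / ((1 - x) * y))
    + (1 - x - y + z) * Real.logb 2 ((1 - x - y + z) / ((1 - x) * (1 - y)))

/-- The domain `Ω_c ⊆ ℝ³`. -/
def OmegaC (c : ℝ) : Set (ℝ × ℝ × ℝ) :=
  {w | c ≤ w.1 ∧ w.1 ≤ 1 - c ∧ c ≤ w.2.1 ∧ w.2.1 ≤ 1 - c ∧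
    c ^ 2 * w.1 ≤ w.2.2 ∧ w.2.2 ≤ (1 - c ^ 2) * w.1 ∧
    c ^ 2 * w.2.1 ≤ w.2.2 ∧ w.2.2 ≤ (1 - c ^ 2) * w.2.1 ∧
    c ^ 2 * (1 - w.1) ≤ 1 + w.2.2 - w.1 - w.2.1 ∧
    1 + w.2.2 - w.1 - w.2.1 ≤ (1 - c ^ 2) * (1 - w.1) ∧
    c ^ 2 * (1 - w.2.1) ≤ 1 + w.2.2 - w.1 - w.2.1 ∧
    1 + w.2.2 - w.1 - w.2.1 ≤ (1 - c ^ 2) * (1 - w.2.1)}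

/-- Mutual information (in bits) of a joint distribution `ν` of a pair of `{0,1}`-valued
random variables; terms where the joint probability is `0` contribute `0`
(automatic since `0 * log 0 = 0`). -/
noncomputable def miBB (ν : Bool × Bool → ℝ) : ℝ :=
  ∑ z : Bool × Bool,
    ν z * Real.logb 2 (ν z / ((∑ b : Bool, ν (z.1, b)) * (∑ a : Bool, ν (a, z.2))))

namespace Stmt15Aux

noncomputable def G (t : ℝ) : ℝ := t * Real.log t

noncomputable def F (x y z : ℝ) : ℝ :=
  G z + G (x - z) + G (y - z) + G (1 - x - y + z) - G x - G (1 - x) - G y - G (1 - y)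

lemma fMI_eq {x y z : ℝ} (hx : 0 < x) (hx1 : x < 1) (hy : 0 < y) (hy1 : y < 1)
    (hz : 0 < z) (hxz : 0 < x - z) (hyz : 0 < y - z) (hw : 0 < 1 - x - y + z) :
    fMI x y z = F x y z / Real.log 2 := by
  have h1x : (0:ℝ) < 1 - x := by linarith
  have h1y : (0:ℝ) < 1 - y := by linarith
  unfold fMI F G
  rw [Real.logb, Real.logb, Real.logb, Real.logb,
    Real.log_div hz.ne' (mul_pos hx hy).ne', Real.log_mul hx.ne' hy.ne',
    Real.log_div hxz.ne' (mul_pos hx h1y).ne', Real.log_mul hx.ne' h1y.ne',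
    Real.log_div hyz.ne' (mul_pos h1x hy).ne', Real.log_mul h1x.ne' hy.ne',
    Real.log_div hw.ne' (mul_pos h1x h1y).ne', Real.log_mul h1x.ne' h1y.ne']
  ring

lemma log_ratio_bound {a b P : ℝ} (ha : 0 < a) (hb : 0 < b)
    (h1 : a ≤ P * b) (h2 : b ≤ P * a) : |Real.log a - Real.log b| ≤ Real.log P := by
  have hP : 0 < P := by
    by_contra h
    push_neg at h
    nlinarith
  rw [abs_le]
  constructor
  · have := Real.log_le_log hb (h2 : b ≤ P * a)
    rw [Real.log_mul hP.ne' ha.ne'] at this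
    linarith
  · have := Real.log_le_log ha (h1 : a ≤ P * b)
    rw [Real.log_mul hP.ne' hb.ne'] at this
    linarith

lemma seg_ineq {p q r s t : ℝ} (h1 : p ≤ q) (h2 : r ≤ s) (ht0 : 0 ≤ t) (ht1 : t ≤ 1) :
    p + t * (r - p) ≤ q + t * (s - q) := by
  nlinarith [mul_nonneg ht0 (sub_nonneg.2 h2), mul_nonneg (sub_nonneg.2 ht1) (sub_nonneg.2 h1)]

lemma mem_seg {c : ℝ} {u v : ℝ × ℝ × ℝ} (hu : u ∈ OmegaC c) (hv : v ∈ OmegaC c)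
    {t : ℝ} (ht0 : 0 ≤ t) (ht1 : t ≤ 1) :
    (v.1 + t * (u.1 - v.1), v.2.1 + t * (u.2.1 - v.2.1), v.2.2 + t * (u.2.2 - v.2.2))
      ∈ OmegaC c := by
  obtain ⟨a1, a2, a3, a4, a5, a6, a7, a8, a9, a10, a11, a12⟩ := hu
  obtain ⟨b1, b2, b3, b4, b5, b6, b7, b8, b9, b10, b11, b12⟩ := hv
  simp only [OmegaC, Set.mem_setOf_eq]
  exact ⟨by linarith [seg_ineq b1 a1 ht0 ht1], by linarith [seg_ineq b2 a2 ht0 ht1],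
    by linarith [seg_ineq b3 a3 ht0 ht1], by linarith [seg_ineq b4 a4 ht0 ht1],
    by linarith [seg_ineq b5 a5 ht0 ht1], by linarith [seg_ineq b6 a6 ht0 ht1],
    by linarith [seg_ineq b7 a7 ht0 ht1], by linarith [seg_ineq b8 a8 ht0 ht1],
    by linarith [seg_ineq b9 a9 ht0 ht1], by linarith [seg_ineq b10 a10 ht0 ht1],
    by linarith [seg_ineq b11 a11 ht0 ht1], by linarith [seg_ineq b12 a12 ht0 ht1]⟩

lemma mem_pos {c : ℝ} (hc0 : 0 < c) {x y z : ℝ} (hw : (x, y, z) ∈ OmegaC c) :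
    0 < x ∧ x < 1 ∧ 0 < y ∧ y < 1 ∧ 0 < z ∧
      0 < x - z ∧ 0 < y - z ∧ 0 < 1 - x - y + z := by
  obtain ⟨a1, a2, a3, a4, a5, a6, a7, a8, a9, a10, a11, a12⟩ := hw
  simp only at a1 a2 a3 a4 a5 a6 a7 a8 a9 a10 a11 a12
  have hc2 : 0 < c ^ 2 := by positivity
  refine ⟨by linarith, by linarith, by linarith, by linarith, ?_, ?_, ?_, ?_⟩
  · nlinarith
  · nlinarith
  · nlinarith
  · nlinarith

/-- The three partial-derivative bounds at a point of `Ω_c`. -/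
lemma grad_bounds {c : ℝ} (hc0 : 0 < c) {x y z : ℝ}
    (hw : (x, y, z) ∈ OmegaC c) :
    |Real.log (x - z) + Real.log (1 - x) - Real.log (1 - x - y + z) - Real.log x|
        ≤ 2 * Real.log (1/c) ∧
    |Real.log (y - z) + Real.log (1 - y) - Real.log (1 - x - y + z) - Real.log y|
        ≤ 2 * Real.log (1/c) ∧
    |Real.log z + Real.log (1 - x - y + z) - Real.log (x - z) - Real.log (y - z)|
        ≤ 5 * Real.log (1/c) := by
  obtain ⟨hx0, hx1, hy0, hy1, hz0, hxz, hyz, hs4⟩ := mem_pos hc0 hw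
  obtain ⟨a1, a2, a3, a4, a5, a6, a7, a8, a9, a10, a11, a12⟩ := hw
  simp only at a1 a2 a3 a4 a5 a6 a7 a8 a9 a10 a11 a12
  have h1x : (0:ℝ) < 1 - x := by linarith
  have h1y : (0:ℝ) < 1 - y := by linarith
  have hc2 : (0:ℝ) < c ^ 2 := by positivity
  have hc5 : (0:ℝ) < c ^ 5 := by positivity
  have a9' : c ^ 2 * (1 - x) ≤ 1 - x - y + z := by linarith
  have a11' : c ^ 2 * (1 - y) ≤ 1 - x - y + z := by linarith
  refine ⟨?_, ?_, ?_⟩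
  · have e : Real.log (x - z) + Real.log (1 - x) - Real.log (1 - x - y + z) - Real.log x
        = Real.log ((x - z) * (1 - x)) - Real.log ((1 - x - y + z) * x) := by
      rw [Real.log_mul hxz.ne' h1x.ne', Real.log_mul hs4.ne' hx0.ne']; ring
    rw [e, show (2:ℝ) * Real.log (1/c) = Real.log ((1/c)^2) by
      rw [Real.log_pow]; norm_num]
    apply log_ratio_bound (by positivity) (by positivity)
    · rw [div_pow, one_pow, div_mul_eq_mul_div, le_div_iff₀ hc2]
      have t1 : x - z ≤ x := by linarith
      have hA : (x - z) * (1 - x) ≤ x * (1 - x) := mul_le_mul_of_nonneg_right t1 h1x.le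
      have hA' : c ^ 2 * ((x - z) * (1 - x)) ≤ c ^ 2 * (x * (1 - x)) :=
        mul_le_mul_of_nonneg_left hA hc2.le
      have hB : x * (c ^ 2 * (1 - x)) ≤ x * (1 - x - y + z) :=
        mul_le_mul_of_nonneg_left a9' hx0.le
      linarith
    · rw [div_pow, one_pow, div_mul_eq_mul_div, le_div_iff₀ hc2]
      have t1 : 1 - x - y + z ≤ 1 - x := by linarith
      have hA : (1 - x - y + z) * x ≤ (1 - x) * x := mul_le_mul_of_nonneg_right t1 hx0.le
      have hA' : c ^ 2 * ((1 - x - y + z) * x) ≤ c ^ 2 * ((1 - x) * x) :=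
        mul_le_mul_of_nonneg_left hA hc2.le
      have t2 : c ^ 2 * x ≤ x - z := by linarith
      have hB : (c ^ 2 * x) * (1 - x) ≤ (x - z) * (1 - x) := mul_le_mul_of_nonneg_right t2 h1x.le
      linarith
  · have e : Real.log (y - z) + Real.log (1 - y) - Real.log (1 - x - y + z) - Real.log y
        = Real.log ((y - z) * (1 - y)) - Real.log ((1 - x - y + z) * y) := by
      rw [Real.log_mul hyz.ne' h1y.ne', Real.log_mul hs4.ne' hy0.ne']; ring
    rw [e, show (2:ℝ) * Real.log (1/c) = Real.log ((1/c)^2) by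
      rw [Real.log_pow]; norm_num]
    apply log_ratio_bound (by positivity) (by positivity)
    · rw [div_pow, one_pow, div_mul_eq_mul_div, le_div_iff₀ hc2]
      have t1 : y - z ≤ y := by linarith
      have hA : (y - z) * (1 - y) ≤ y * (1 - y) := mul_le_mul_of_nonneg_right t1 h1y.le
      have hA' : c ^ 2 * ((y - z) * (1 - y)) ≤ c ^ 2 * (y * (1 - y)) :=
        mul_le_mul_of_nonneg_left hA hc2.le
      have hB : y * (c ^ 2 * (1 - y)) ≤ y * (1 - x - y + z) :=
        mul_le_mul_of_nonneg_left a11' hy0.le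
      linarith
    · rw [div_pow, one_pow, div_mul_eq_mul_div, le_div_iff₀ hc2]
      have t1 : 1 - x - y + z ≤ 1 - y := by linarith
      have hA : (1 - x - y + z) * y ≤ (1 - y) * y := mul_le_mul_of_nonneg_right t1 hy0.le
      have hA' : c ^ 2 * ((1 - x - y + z) * y) ≤ c ^ 2 * ((1 - y) * y) :=
        mul_le_mul_of_nonneg_left hA hc2.le
      have t2 : c ^ 2 * y ≤ y - z := by linarith
      have hB : (c ^ 2 * y) * (1 - y) ≤ (y - z) * (1 - y) := mul_le_mul_of_nonneg_right t2 h1y.le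
      linarith
  · have e : Real.log z + Real.log (1 - x - y + z) - Real.log (x - z) - Real.log (y - z)
        = Real.log (z * (1 - x - y + z)) - Real.log ((x - z) * (y - z)) := by
      rw [Real.log_mul hz0.ne' hs4.ne', Real.log_mul hxz.ne' hyz.ne']; ring
    rw [e, show (5:ℝ) * Real.log (1/c) = Real.log ((1/c)^5) by
      rw [Real.log_pow]; norm_num]
    apply log_ratio_bound (by positivity) (by positivity)
    · rw [div_pow, one_pow, div_mul_eq_mul_div, le_div_iff₀ hc5]
      have t1 : z ≤ x := by linarith
      have t2 : 1 - x - y + z ≤ 1 - y := by linarith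
      have t3 : c ^ 2 * x ≤ x - z := by linarith
      have t4 : c ^ 2 * y ≤ y - z := by linarith
      have t5 : c * (1 - y) ≤ y := by
        have := mul_nonneg hc0.le hy0.le
        nlinarith
      have hA : z * (1 - x - y + z) ≤ x * (1 - y) := mul_le_mul t1 t2 hs4.le hx0.le
      have hB : c ^ 5 * (z * (1 - x - y + z)) ≤ c ^ 5 * (x * (1 - y)) :=
        mul_le_mul_of_nonneg_left hA hc5.le
      have hC : c ^ 4 * x * (c * (1 - y)) ≤ c ^ 4 * x * y :=
        mul_le_mul_of_nonneg_left t5 (by positivity)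
      have hD : (c ^ 2 * x) * (c ^ 2 * y) ≤ (x - z) * (y - z) :=
        mul_le_mul t3 t4 (by positivity) hxz.le
      linarith
    · rw [div_pow, one_pow, div_mul_eq_mul_div, le_div_iff₀ hc5]
      have t1 : x - z ≤ x := by linarith
      have t2 : y - z ≤ y := by linarith
      have t3 : c ^ 2 * x ≤ z := a5
      have t5 : c * y ≤ 1 - y := by
        have := mul_nonneg hc0.le h1y.le
        nlinarith
      have hA : (x - z) * (y - z) ≤ x * y := mul_le_mul t1 t2 hyz.le hx0.le
      have hB : c ^ 5 * ((x - z) * (y - z)) ≤ c ^ 5 * (x * y) :=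
        mul_le_mul_of_nonneg_left hA hc5.le
      have hC : c ^ 4 * x * (c * y) ≤ c ^ 4 * x * (1 - y) :=
        mul_le_mul_of_nonneg_left t5 (by positivity)
      have hD : (c ^ 2 * x) * (c ^ 2 * (1 - y)) ≤ z * (1 - x - y + z) :=
        mul_le_mul t3 a11' (by positivity) hz0.le
      linarith

lemma G_term {f : ℝ → ℝ} {f' t a : ℝ} (hf : HasDerivAt f f' t) (ha : f t = a)
    (hpos : 0 < a) :
    HasDerivAt (fun s => G (f s)) (f' * (Real.log a + 1)) t := by
  have hpos' : 0 < f t := ha ▸ hpos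
  have h := hf.mul (hf.log hpos'.ne')
  have e : f' * Real.log (f t) + f t * (f' / f t) = f' * (Real.log a + 1) := by
    rw [ha]
    field_simp
  rw [← e]
  exact h

lemma F_hasDerivAt {c : ℝ} (hc0 : 0 < c) {vx vy vz dx dy dz t : ℝ}
    (hmem : (vx + t * dx, vy + t * dy, vz + t * dz) ∈ OmegaC c) :
    HasDerivAt (fun s => F (vx + s * dx) (vy + s * dy) (vz + s * dz))
      (dx * (Real.log (vx + t * dx - (vz + t * dz)) + Real.log (1 - (vx + t * dx))
              - Real.log (1 - (vx + t * dx) - (vy + t * dy) + (vz + t * dz))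
              - Real.log (vx + t * dx))
       + dy * (Real.log (vy + t * dy - (vz + t * dz)) + Real.log (1 - (vy + t * dy))
              - Real.log (1 - (vx + t * dx) - (vy + t * dy) + (vz + t * dz))
              - Real.log (vy + t * dy))
       + dz * (Real.log (vz + t * dz)
              + Real.log (1 - (vx + t * dx) - (vy + t * dy) + (vz + t * dz))
              - Real.log (vx + t * dx - (vz + t * dz))
              - Real.log (vy + t * dy - (vz + t * dz)))) t := by
  obtain ⟨hx0, hx1, hy0, hy1, hz0, hxz, hyz, hs4⟩ := mem_pos hc0 hmem
  have hX : HasDerivAt (fun s : ℝ => vx + s * dx) dx t := by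
    simpa using ((hasDerivAt_id t).mul_const dx).const_add vx
  have hY : HasDerivAt (fun s : ℝ => vy + s * dy) dy t := by
    simpa using ((hasDerivAt_id t).mul_const dy).const_add vy
  have hZ : HasDerivAt (fun s : ℝ => vz + s * dz) dz t := by
    simpa using ((hasDerivAt_id t).mul_const dz).const_add vz
  have h1 := G_term hZ rfl hz0
  have h2 := G_term (hX.sub hZ) rfl hxz
  have h3 := G_term (hY.sub hZ) rfl hyz
  have h4 := G_term ((((hasDerivAt_const t (1:ℝ)).sub hX).sub hY).add hZ) rfl hs4
  have h5 := G_term hX rfl hx0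
  have h6 := G_term ((hasDerivAt_const t (1:ℝ)).sub hX)
    rfl (by linarith : (0:ℝ) < 1 - (vx + t * dx))
  have h7 := G_term hY rfl hy0
  have h8 := G_term ((hasDerivAt_const t (1:ℝ)).sub hY)
    rfl (by linarith : (0:ℝ) < 1 - (vy + t * dy))
  have H := ((((((h1.add h2).add h3).add h4).sub h5).sub h6).sub h7).sub h8
  convert H using 1
  · rfl
  · rfl
  · rfl
  simp only [Pi.sub_apply, Pi.add_apply]
  ring

end Stmt15Aux

open Stmt15Aux in
theorem stmt15 (c : ℝ) (hc : c ∈ Set.Ioc (0:ℝ) (1/2)) :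
    (∀ ν : Bool × Bool → ℝ, (∀ z, 0 ≤ ν z) → (∑ z, ν z = 1) →
      ((∑ b : Bool, ν (true, b), ∑ a : Bool, ν (a, true), ν (true, true)) ∈ OmegaC c) →
      miBB ν = fMI (∑ b : Bool, ν (true, b)) (∑ a : Bool, ν (a, true)) (ν (true, true))) ∧
    (∀ u ∈ OmegaC c, ∀ v ∈ OmegaC c,
      |fMI u.1 u.2.1 u.2.2 - fMI v.1 v.2.1 v.2.2|
        ≤ 16 * Real.logb 2 (1 / c)
            * max |u.1 - v.1| (max |u.2.1 - v.2.1| |u.2.2 - v.2.2|)) := by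
  obtain ⟨hc0, hc12⟩ := hc
  constructor
  · intro ν hpos hsum _hmem
    have hsum' : ν (true, true) + ν (true, false) + (ν (false, true) + ν (false, false)) = 1 := by
      simpa [Fintype.sum_prod_type, Fintype.sum_bool] using hsum
    simp only [miBB, fMI, Fintype.sum_prod_type, Fintype.sum_bool]
    rw [show ν (true, true) + ν (true, false) - ν (true, true) = ν (true, false) by ring,
      show ν (true, true) + ν (false, true) - ν (true, true) = ν (false, true) by ring,
      show 1 - (ν (true, true) + ν (true, false)) - (ν (true, true) + ν (false, true))
          + ν (true, true) = ν (false, false) by linarith,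
      show 1 - (ν (true, true) + ν (false, true)) = ν (true, false) + ν (false, false) by linarith,
      show 1 - (ν (true, true) + ν (true, false)) = ν (false, true) + ν (false, false) by linarith]
    ring
  · intro u hu v hv
    have hlog2 : (0:ℝ) < Real.log 2 := Real.log_pos one_lt_two
    have hL0 : 0 ≤ Real.log (1/c) := by
      apply Real.log_nonneg
      rw [le_div_iff₀ hc0]
      linarith
    set M := max |u.1 - v.1| (max |u.2.1 - v.2.1| |u.2.2 - v.2.2|) with hMdef
    have hM0 : (0:ℝ) ≤ M := le_trans (abs_nonneg _) (le_max_left _ _)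
    have hMx : |u.1 - v.1| ≤ M := le_max_left _ _
    have hMy : |u.2.1 - v.2.1| ≤ M := le_trans (le_max_left _ _) (le_max_right _ _)
    have hMz : |u.2.2 - v.2.2| ≤ M := le_trans (le_max_right _ _) (le_max_right _ _)
    have hmem : ∀ t : ℝ, t ∈ Set.Icc (0:ℝ) 1 →
        (v.1 + t * (u.1 - v.1), v.2.1 + t * (u.2.1 - v.2.1), v.2.2 + t * (u.2.2 - v.2.2))
          ∈ OmegaC c := fun t ht => mem_seg hu hv ht.1 ht.2
    set φ : ℝ → ℝ := fun s => F (v.1 + s * (u.1 - v.1)) (v.2.1 + s * (u.2.1 - v.2.1))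
      (v.2.2 + s * (u.2.2 - v.2.2)) with hφdef
    set D : ℝ → ℝ := fun t =>
      (u.1 - v.1) * (Real.log (v.1 + t * (u.1 - v.1) - (v.2.2 + t * (u.2.2 - v.2.2)))
          + Real.log (1 - (v.1 + t * (u.1 - v.1)))
          - Real.log (1 - (v.1 + t * (u.1 - v.1)) - (v.2.1 + t * (u.2.1 - v.2.1))
              + (v.2.2 + t * (u.2.2 - v.2.2)))
          - Real.log (v.1 + t * (u.1 - v.1)))
      + (u.2.1 - v.2.1) * (Real.log (v.2.1 + t * (u.2.1 - v.2.1) - (v.2.2 + t * (u.2.2 - v.2.2)))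
          + Real.log (1 - (v.2.1 + t * (u.2.1 - v.2.1)))
          - Real.log (1 - (v.1 + t * (u.1 - v.1)) - (v.2.1 + t * (u.2.1 - v.2.1))
              + (v.2.2 + t * (u.2.2 - v.2.2)))
          - Real.log (v.2.1 + t * (u.2.1 - v.2.1)))
      + (u.2.2 - v.2.2) * (Real.log (v.2.2 + t * (u.2.2 - v.2.2))
          + Real.log (1 - (v.1 + t * (u.1 - v.1)) - (v.2.1 + t * (u.2.1 - v.2.1))
              + (v.2.2 + t * (u.2.2 - v.2.2)))
          - Real.log (v.1 + t * (u.1 - v.1) - (v.2.2 + t * (u.2.2 - v.2.2)))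
          - Real.log (v.2.1 + t * (u.2.1 - v.2.1) - (v.2.2 + t * (u.2.2 - v.2.2)))) with hDdef
    have key : ‖φ 1 - φ 0‖ ≤ 9 * Real.log (1/c) * M := by
      apply norm_image_sub_le_of_norm_deriv_le_segment_01'
        (f' := D)
      · intro t ht
        exact (F_hasDerivAt hc0 (hmem t ht)).hasDerivWithinAt
      · intro t ht
        obtain ⟨g1, g2, g3⟩ := grad_bounds hc0 (hmem t ⟨ht.1, ht.2.le⟩)
        rw [Real.norm_eq_abs, hDdef]
        have b1 := mul_le_mul hMx g1 (abs_nonneg _) hM0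
        have b2 := mul_le_mul hMy g2 (abs_nonneg _) hM0
        have b3 := mul_le_mul hMz g3 (abs_nonneg _) hM0
        refine le_trans (abs_add_three _ _ _) ?_
        rw [abs_mul, abs_mul, abs_mul]
        linarith [b1, b2, b3]
    have e1 : φ 1 = F u.1 u.2.1 u.2.2 := by rw [hφdef]; norm_num
    have e0 : φ 0 = F v.1 v.2.1 v.2.2 := by rw [hφdef]; norm_num
    rw [e1, e0, Real.norm_eq_abs] at key
    obtain ⟨ux0, ux1, uy0, uy1, uz0, uxz, uyz, us4⟩ := mem_pos hc0 (hu : (u.1, u.2.1, u.2.2) ∈ OmegaC c)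
    obtain ⟨vx0, vx1, vy0, vy1, vz0, vxz, vyz, vs4⟩ := mem_pos hc0 (hv : (v.1, v.2.1, v.2.2) ∈ OmegaC c)
    rw [fMI_eq ux0 ux1 uy0 uy1 uz0 uxz uyz us4, fMI_eq vx0 vx1 vy0 vy1 vz0 vxz vyz vs4,
      div_sub_div_same, abs_div, abs_of_pos hlog2, Real.logb, div_le_iff₀ hlog2]
    have hrw : 16 * (Real.log (1/c) / Real.log 2)
        * max |u.1 - v.1| (max |u.2.1 - v.2.1| |u.2.2 - v.2.2|) * Real.log 2
        = 16 * Real.log (1/c) * M := by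
      rw [← hMdef]
      field_simp
    rw [hrw]
    nlinarith [mul_nonneg hL0 hM0]
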